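/- In the action-angle parametrization of the equilateral hexagon by the T_135 triangulation, the distance from v_1 to v_3 is d_1, the distance from v_3 to v_5 is d_2, and the distance from v_5 to v_1 is d_3, whenever (d_1,d_2,d_3) lies in the interior of the moment polytope. -/

import Mathlib

open Real

noncomputable def heronD (d₁ d₂ d₃ : ℝ) : ℝ :=
  Real.sqrt (2 * d₁ ^ 2 * d₂ ^ 2 + 2 * d₁ ^ 2 * d₃ ^ 2 + 2 * d₂ ^ 2 * d₃ ^ 2
    - d₁ ^ 4 - d₂ ^ 4 - d₃ ^ 4)

noncomputable def elen (p q : ℝ × ℝ × ℝ) : ℝ :=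
  Real.sqrt ((p.1 - q.1) ^ 2 + (p.2.1 - q.2.1) ^ 2 + (p.2.2 - q.2.2) ^ 2)

theorem stmt_10 (d₁ d₂ d₃ : ℝ)
    (h₁ : 0 < d₁) (h₁' : d₁ < 2) (h₂ : 0 < d₂) (h₂' : d₂ < 2) (h₃ : 0 < d₃) (h₃' : d₃ < 2)
    (ht₁ : d₁ < d₂ + d₃) (ht₂ : d₂ < d₁ + d₃) (ht₃ : d₃ < d₁ + d₂) :
    let v₁ : ℝ × ℝ × ℝ := (0, 0, 0)
    let v₃ : ℝ × ℝ × ℝ := (d₁, 0, 0)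
    let v₅ : ℝ × ℝ × ℝ :=
      ((d₁ ^ 2 - d₂ ^ 2 + d₃ ^ 2) / (2 * d₁), heronD d₁ d₂ d₃ / (2 * d₁), 0)
    elen v₁ v₃ = d₁ ∧ elen v₃ v₅ = d₂ ∧ elen v₅ v₁ = d₃ := by
  intro v₁ v₃ v₅
  have hE : (0:ℝ) ≤ 2 * d₁ ^ 2 * d₂ ^ 2 + 2 * d₁ ^ 2 * d₃ ^ 2 + 2 * d₂ ^ 2 * d₃ ^ 2
      - d₁ ^ 4 - d₂ ^ 4 - d₃ ^ 4 := by
    have : 2 * d₁ ^ 2 * d₂ ^ 2 + 2 * d₁ ^ 2 * d₃ ^ 2 + 2 * d₂ ^ 2 * d₃ ^ 2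
      - d₁ ^ 4 - d₂ ^ 4 - d₃ ^ 4
      = (d₁ + d₂ + d₃) * (-d₁ + d₂ + d₃) * (d₁ - d₂ + d₃) * (d₁ + d₂ - d₃) := by ring
    rw [this]
    have := mul_pos (mul_pos (mul_pos (by linarith : (0:ℝ) < d₁ + d₂ + d₃)
      (by linarith : (0:ℝ) < -d₁ + d₂ + d₃)) (by linarith : (0:ℝ) < d₁ - d₂ + d₃))
      (by linarith : (0:ℝ) < d₁ + d₂ - d₃)
    linarith
  have hH : heronD d₁ d₂ d₃ ^ 2 = 2 * d₁ ^ 2 * d₂ ^ 2 + 2 * d₁ ^ 2 * d₃ ^ 2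
      + 2 * d₂ ^ 2 * d₃ ^ 2 - d₁ ^ 4 - d₂ ^ 4 - d₃ ^ 4 := Real.sq_sqrt hE
  have hd₁ : (2 * d₁) ≠ 0 := by positivity
  refine ⟨?_, ?_, ?_⟩
  · show Real.sqrt _ = d₁
    have : ((0:ℝ) - d₁) ^ 2 + ((0:ℝ) - 0) ^ 2 + ((0:ℝ) - 0) ^ 2 = d₁ ^ 2 := by ring
    simp only [elen, v₁, v₃, v₅, this]
    exact Real.sqrt_sq h₁.le
  · show Real.sqrt _ = d₂
    have key : (d₁ - (d₁ ^ 2 - d₂ ^ 2 + d₃ ^ 2) / (2 * d₁)) ^ 2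
        + ((0:ℝ) - heronD d₁ d₂ d₃ / (2 * d₁)) ^ 2 + ((0:ℝ) - 0) ^ 2 = d₂ ^ 2 := by
      field_simp
      nlinarith [hH]
    simp only [elen, v₁, v₃, v₅, key]
    exact Real.sqrt_sq h₂.le
  · show Real.sqrt _ = d₃
    have key : ((d₁ ^ 2 - d₂ ^ 2 + d₃ ^ 2) / (2 * d₁) - 0) ^ 2
        + (heronD d₁ d₂ d₃ / (2 * d₁) - 0) ^ 2 + ((0:ℝ) - 0) ^ 2 = d₃ ^ 2 := by
      field_simp
      nlinarith [hH]
    simp only [elen, v₁, v₃, v₅, key]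
    exact Real.sqrt_sq h₃.le
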